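/- Subtracted integral representation of the function Φ_n: let n ≥ 1 and m ≥ 1 be integers and z a real number. Then the function u ↦ u^{m/2−n−1}(1−u)^{n−1}·(e^{zu} − Σ_{k=0}^{n−1} (zu)^k/k!) is integrable on (0,1) and (1/(n−1)!) · ∫_0^1 u^{m/2−n−1}(1−u)^{n−1}·(e^{zu} − Σ_{k=0}^{n−1} (zu)^k/k!) du = Σ_{k=n}^{∞} (Γ(m/2−n+k)/(Γ(m/2+k)·k!)) · z^k, where the series converges absolutely. -/

import Mathlib

open MeasureTheory

namespace NLT

lemma exp_tsum (x : ℝ) : Real.exp x = ∑' k : ℕ, x ^ k / (Nat.factorial k : ℝ) := by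
  rw [Real.exp_eq_exp_ℝ, NormedSpace.exp_eq_tsum_div]

lemma tail_eq (n : ℕ) (x : ℝ) :
    Real.exp x - ∑ k ∈ Finset.range n, x ^ k / (Nat.factorial k : ℝ)
      = ∑' j : ℕ, x ^ (n + j) / (Nat.factorial (n + j) : ℝ) := by
  have hs := Real.summable_pow_div_factorial x
  have h := Summable.sum_add_tsum_nat_add n hs
  rw [exp_tsum, ← h]
  simp [add_comm]

lemma beta_Ioo (a : ℝ) (ha : 0 < a) (n : ℕ) (hn : 1 ≤ n) :
    ∫ u in Set.Ioo (0:ℝ) 1, u ^ (a - 1) * (1 - u) ^ (n - 1)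
      = Real.Gamma a * (Nat.factorial (n - 1) : ℝ) / Real.Gamma (a + n) := by
  have h1 : ∫ u in Set.Ioo (0:ℝ) 1, u ^ (a - 1) * (1 - u) ^ (n - 1)
      = ∫ u in (0:ℝ)..1, u ^ (a - 1) * (1 - u) ^ (n - 1) := by
    rw [intervalIntegral.integral_of_le zero_le_one, ← MeasureTheory.integral_Ioc_eq_integral_Ioo]
  have hcast : ((∫ u in (0:ℝ)..1, u ^ (a - 1) * (1 - u) ^ (n - 1) : ℝ) : ℂ)
      = Complex.betaIntegral a n := by
    rw [Complex.betaIntegral, ← intervalIntegral.integral_ofReal]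
    refine intervalIntegral.integral_congr fun x hx => ?_
    rw [Set.uIcc_of_le zero_le_one] at hx
    have hx0 : (0:ℝ) ≤ x := hx.1
    have hexp : (a:ℂ) - 1 = ((a - 1 : ℝ) : ℂ) := by push_cast; ring
    have hn' : ((n:ℂ) - 1) = ((n - 1 : ℕ) : ℕ) := by
      push_cast [Nat.cast_sub hn]; ring
    rw [hexp, ← Complex.ofReal_cpow hx0]
    rw [show ((1:ℂ) - (x:ℂ)) = (((1 - x : ℝ)) : ℂ) by push_cast; ring]
    rw [hn', Complex.cpow_natCast]
    push_cast
    ring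
  have hG := Complex.Gamma_mul_Gamma_eq_betaIntegral
    (s := (a:ℂ)) (t := (n:ℂ)) (by simpa using ha)
    (by simp; positivity)
  rw [← hcast] at hG
  have hgn : ((n:ℂ)) = (((n:ℝ)):ℂ) := by norm_num
  rw [hgn, Complex.Gamma_ofReal, show (a:ℂ) + ((n:ℝ):ℂ) = (((a + n : ℝ)):ℂ) by push_cast; ring,
    Complex.Gamma_ofReal, Complex.Gamma_ofReal, ← Complex.ofReal_mul, ← Complex.ofReal_mul]
    at hG
  have hR : Real.Gamma a * Real.Gamma n
      = Real.Gamma (a + n) * ∫ u in (0:ℝ)..1, u ^ (a - 1) * (1 - u) ^ (n - 1) :=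
    Complex.ofReal_injective hG
  have hGn : Real.Gamma n = (Nat.factorial (n - 1) : ℝ) := by
    have : (n : ℝ) = ((n - 1 : ℕ) : ℝ) + 1 := by
      push_cast [Nat.cast_sub hn]; ring
    rw [this, Real.Gamma_nat_eq_factorial]
  have hpos : 0 < Real.Gamma (a + n) := Real.Gamma_pos_of_pos (by positivity)
  rw [h1]
  rw [hGn] at hR
  field_simp at hR ⊢
  linarith [hR]

lemma shift_summable (x : ℝ) (n : ℕ) :
    Summable fun j : ℕ => x ^ (n + j) / (Nat.factorial (n + j) : ℝ) := by
  have := (summable_nat_add_iff n).2 (Real.summable_pow_div_factorial x)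
  simpa [add_comm] using this

lemma tail_abs_bound (n : ℕ) (x : ℝ) :
    |∑' j : ℕ, x ^ (n + j) / (Nat.factorial (n + j) : ℝ)| ≤ |x| ^ n * Real.exp |x| := by
  have hs : Summable fun j : ℕ => |x ^ (n + j) / (Nat.factorial (n + j) : ℝ)| := by
    simpa [abs_div, abs_pow] using (shift_summable |x| n)
  have hs' : Summable fun j : ℕ => ‖x ^ (n + j) / (Nat.factorial (n + j) : ℝ)‖ := by
    simp only [Real.norm_eq_abs]; exact hs
  have h1 : |∑' j : ℕ, x ^ (n + j) / (Nat.factorial (n + j) : ℝ)|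
      ≤ ∑' j : ℕ, |x ^ (n + j) / (Nat.factorial (n + j) : ℝ)| := by
    have := norm_tsum_le_tsum_norm hs'
    simp only [Real.norm_eq_abs] at this
    exact this
  have h2 : ∀ j : ℕ, |x ^ (n + j) / (Nat.factorial (n + j) : ℝ)|
      ≤ |x| ^ n * (|x| ^ j / (Nat.factorial j : ℝ)) := by
    intro j
    rw [abs_div, abs_pow, Nat.abs_cast, pow_add, mul_div_assoc]
    gcongr
    exact Nat.le_add_left j n
  have h3 : ∑' j : ℕ, |x ^ (n + j) / (Nat.factorial (n + j) : ℝ)|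
      ≤ ∑' j : ℕ, |x| ^ n * (|x| ^ j / (Nat.factorial j : ℝ)) :=
    hs.tsum_le_tsum h2 ((Real.summable_pow_div_factorial |x|).mul_left _)
  have h4 : ∑' j : ℕ, |x| ^ n * (|x| ^ j / (Nat.factorial j : ℝ))
      = |x| ^ n * Real.exp |x| := by
    rw [tsum_mul_left, ← exp_tsum]
  linarith

lemma meas_base (c : ℝ) (k : ℕ) :
    Measurable (fun u : ℝ => u ^ c * (1 - u) ^ k) := by fun_prop

lemma int_rpow (c : ℝ) (hc : -1 < c) :
    IntegrableOn (fun u : ℝ => u ^ c) (Set.Ioo (0:ℝ) 1) := by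
  have h := intervalIntegral.intervalIntegrable_rpow' (a := (0:ℝ)) (b := 1) hc
  rw [intervalIntegrable_iff_integrableOn_Ioo_of_le zero_le_one] at h
  exact h

lemma int_rpow_mul (c : ℝ) (hc : -1 < c) (k : ℕ) :
    IntegrableOn (fun u : ℝ => u ^ c * (1 - u) ^ k) (Set.Ioo (0:ℝ) 1) := by
  refine Integrable.mono' (int_rpow c hc) ((meas_base c k).aestronglyMeasurable) ?_
  filter_upwards [ae_restrict_mem measurableSet_Ioo] with u hu
  have h0 : 0 < u := hu.1
  have h1 : u < 1 := hu.2
  have hb : (0:ℝ) ≤ 1 - u := by linarith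
  have hb1 : (1 - u) ^ k ≤ 1 := pow_le_one₀ hb (by linarith)
  rw [Real.norm_eq_abs, abs_mul, abs_of_nonneg (Real.rpow_nonneg h0.le c),
    abs_of_nonneg (pow_nonneg hb k)]
  nlinarith [Real.rpow_nonneg h0.le c]


/-- Subtracted integral representation of the function `Φₙ`: for integers `n ≥ 1`, `m ≥ 1`
and real `z`, the subtracted integrand is integrable on `(0,1)` and
`(1/(n−1)!) ∫₀¹ u^{m/2−n−1}(1−u)^{n−1}(e^{zu} − ∑_{k<n} (zu)ᵏ/k!) du
  = ∑_{k≥n} (Γ(m/2−n+k)/(Γ(m/2+k)k!)) zᵏ`, the series converging absolutely. -/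
theorem phi_integral_representation (n m : ℕ) (hn : 1 ≤ n) (hm : 1 ≤ m) (z : ℝ) :
    IntegrableOn (fun u : ℝ =>
      u ^ ((m : ℝ) / 2 - n - 1) * (1 - u) ^ (n - 1)
        * (Real.exp (z * u) - ∑ k ∈ Finset.range n, (z * u) ^ k / (Nat.factorial k : ℝ)))
      (Set.Ioo 0 1) ∧
    Summable (fun j : ℕ =>
      |Real.Gamma ((m : ℝ) / 2 - n + (n + j : ℕ))
          / (Real.Gamma ((m : ℝ) / 2 + (n + j : ℕ)) * (Nat.factorial (n + j) : ℝ))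
        * z ^ (n + j)|) ∧
    (1 / (Nat.factorial (n - 1) : ℝ))
        * ∫ u in Set.Ioo (0 : ℝ) 1,
            u ^ ((m : ℝ) / 2 - n - 1) * (1 - u) ^ (n - 1)
              * (Real.exp (z * u) - ∑ k ∈ Finset.range n, (z * u) ^ k / (Nat.factorial k : ℝ))
      = ∑' j : ℕ,
          Real.Gamma ((m : ℝ) / 2 - n + (n + j : ℕ))
            / (Real.Gamma ((m : ℝ) / 2 + (n + j : ℕ)) * (Nat.factorial (n + j) : ℝ))
            * z ^ (n + j) := by
  have ha : (0:ℝ) < (m:ℝ)/2 := by positivity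
  set a : ℝ := (m:ℝ)/2 with ha_def
  set g : ℕ → ℝ → ℝ := fun j u =>
    (z ^ (n + j) / (Nat.factorial (n + j) : ℝ)) * (u ^ (a + j - 1) * (1 - u) ^ (n - 1))
    with hg_def
  -- pointwise identity on Ioo
  have hpt : ∀ u ∈ Set.Ioo (0:ℝ) 1,
      u ^ (a - n - 1) * (1 - u) ^ (n - 1)
        * (Real.exp (z*u) - ∑ k ∈ Finset.range n, (z*u)^k / (Nat.factorial k : ℝ))
      = ∑' j : ℕ, g j u := by
    intro u hu
    have hu0 : 0 < u := hu.1
    rw [tail_eq n (z*u), ← tsum_mul_left]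
    refine tsum_congr fun j => ?_
    have hexp : u ^ (a + (j:ℝ) - 1) = u ^ (a - n - 1) * u ^ (n + j) := by
      rw [← Real.rpow_natCast u (n+j), ← Real.rpow_add hu0]
      congr 1; push_cast; ring
    simp only [hg_def, hexp, mul_pow]
    ring
  -- integrability of each g j
  have hcj : ∀ j : ℕ, (-1:ℝ) < a + j - 1 := by
    intro j
    have : (0:ℝ) ≤ j := Nat.cast_nonneg j
    linarith
  have hgint : ∀ j : ℕ, IntegrableOn (g j) (Set.Ioo (0:ℝ) 1) := fun j =>
    (int_rpow_mul (a + j - 1) (hcj j) (n-1)).const_mul _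
  have hgmeas : ∀ j : ℕ, AEStronglyMeasurable (g j) (volume.restrict (Set.Ioo (0:ℝ) 1)) :=
    fun j => ((meas_base (a + j - 1) (n-1)).const_mul _).aestronglyMeasurable
  -- value of each integral
  have hgval : ∀ j : ℕ, ∫ u in Set.Ioo (0:ℝ) 1, g j u
      = (z ^ (n + j) / (Nat.factorial (n + j) : ℝ))
        * (Real.Gamma (a + j) * (Nat.factorial (n-1) : ℝ) / Real.Gamma (a + j + n)) := by
    intro j
    simp only [hg_def]
    rw [integral_const_mul]
    rw [show a + (j:ℝ) - 1 = (a + j) - 1 from by ring]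
    rw [beta_Ioo (a + j) (by positivity) n hn]
  -- B₀ and bounds on integrals of ‖g j‖
  set B : ℝ := ∫ u in Set.Ioo (0:ℝ) 1, u ^ (a - 1) * (1 - u) ^ (n - 1) with hB_def
  have hB0 : 0 ≤ B := by
    refine setIntegral_nonneg measurableSet_Ioo fun u hu => ?_
    have h1u : (0:ℝ) ≤ 1 - u := by linarith [hu.2]
    exact mul_nonneg (Real.rpow_nonneg hu.1.le _) (pow_nonneg h1u _)
  have hbase_int : ∀ j : ℕ,
      IntegrableOn (fun u : ℝ => u ^ (a + j - 1) * (1 - u) ^ (n - 1)) (Set.Ioo (0:ℝ) 1) :=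
    fun j => int_rpow_mul _ (hcj j) _
  have hbase_le : ∀ j : ℕ, (∫ u in Set.Ioo (0:ℝ) 1, u ^ (a + j - 1) * (1 - u) ^ (n - 1)) ≤ B := by
    intro j
    refine setIntegral_mono_on (hbase_int j) (by simpa using hbase_int 0) measurableSet_Ioo
      fun u hu => ?_
    have h1u : (0:ℝ) ≤ 1 - u := by linarith [hu.2]
    refine mul_le_mul_of_nonneg_right ?_ (by positivity)
    exact Real.rpow_le_rpow_of_exponent_ge hu.1 hu.2.le (by
      have : (0:ℝ) ≤ j := Nat.cast_nonneg j
      linarith)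
  have hbase_nonneg : ∀ j : ℕ, 0 ≤ ∫ u in Set.Ioo (0:ℝ) 1, u ^ (a + j - 1) * (1 - u) ^ (n - 1) := by
    intro j
    refine setIntegral_nonneg measurableSet_Ioo fun u hu => ?_
    have h1u : (0:ℝ) ≤ 1 - u := by linarith [hu.2]
    exact mul_nonneg (Real.rpow_nonneg hu.1.le _) (pow_nonneg h1u _)
  have hnorm_eq : ∀ j : ℕ, (∫ u in Set.Ioo (0:ℝ) 1, ‖g j u‖)
      = (|z| ^ (n + j) / (Nat.factorial (n + j) : ℝ))
        * ∫ u in Set.Ioo (0:ℝ) 1, u ^ (a + j - 1) * (1 - u) ^ (n - 1) := by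
    intro j
    rw [← integral_const_mul]
    refine setIntegral_congr_fun measurableSet_Ioo fun u hu => ?_
    have h1u : (0:ℝ) ≤ 1 - u := by linarith [hu.2]
    have hru : (0:ℝ) ≤ u ^ (a + j - 1) := Real.rpow_nonneg hu.1.le _
    simp only [hg_def, Real.norm_eq_abs, abs_mul, abs_div, abs_pow, Nat.abs_cast,
      abs_of_nonneg hru, abs_of_nonneg (pow_nonneg h1u (n-1))]
  have hnorm_le : ∀ j : ℕ, (∫ u in Set.Ioo (0:ℝ) 1, ‖g j u‖)
      ≤ |z| ^ (n + j) / (Nat.factorial (n + j) : ℝ) * B := by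
    intro j
    rw [hnorm_eq j]
    exact mul_le_mul_of_nonneg_left (hbase_le j) (by positivity)
  have hS : Summable fun j : ℕ => |z| ^ (n + j) / (Nat.factorial (n + j) : ℝ) * B :=
    (shift_summable |z| n).mul_right B
  -- lintegral condition
  have hlint : (∑' j : ℕ, ∫⁻ u in Set.Ioo (0:ℝ) 1, ‖g j u‖ₑ) ≠ ⊤ := by
    have heq : ∀ j : ℕ, (∫⁻ u in Set.Ioo (0:ℝ) 1, ‖g j u‖ₑ)
        = ENNReal.ofReal (∫ u in Set.Ioo (0:ℝ) 1, ‖g j u‖) := fun j =>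
      (MeasureTheory.ofReal_integral_norm_eq_lintegral_enorm (hgint j)).symm
    have hle : (∑' j : ℕ, ∫⁻ u in Set.Ioo (0:ℝ) 1, ‖g j u‖ₑ)
        ≤ ∑' j : ℕ, ENNReal.ofReal (|z| ^ (n + j) / (Nat.factorial (n + j) : ℝ) * B) := by
      refine ENNReal.tsum_le_tsum fun j => ?_
      rw [heq j]
      exact ENNReal.ofReal_le_ofReal (hnorm_le j)
    have : (∑' j : ℕ, ENNReal.ofReal (|z| ^ (n + j) / (Nat.factorial (n + j) : ℝ) * B)) ≠ ⊤ := by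
      rw [← ENNReal.ofReal_tsum_of_nonneg (fun j => by positivity) hS]
      exact ENNReal.ofReal_ne_top
    exact ne_top_of_le_ne_top this hle
  -- swap integral and sum
  have hswap : (∫ u in Set.Ioo (0:ℝ) 1, ∑' j : ℕ, g j u)
      = ∑' j : ℕ, ∫ u in Set.Ioo (0:ℝ) 1, g j u :=
    MeasureTheory.integral_tsum hgmeas hlint
  -- term identity
  have hfac1 : ((Nat.factorial (n-1) : ℝ)) ≠ 0 := by
    exact_mod_cast (Nat.factorial_pos (n-1)).ne'
  have hterm : ∀ j : ℕ,
      Real.Gamma (a - n + (n + j : ℕ))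
          / (Real.Gamma (a + (n + j : ℕ)) * (Nat.factorial (n + j) : ℝ)) * z ^ (n + j)
        = (1 / (Nat.factorial (n-1) : ℝ)) * ∫ u in Set.Ioo (0:ℝ) 1, g j u := by
    intro j
    rw [hgval j]
    have e1 : a - n + ((n + j : ℕ) : ℝ) = a + j := by push_cast; ring
    have e2 : a + ((n + j : ℕ) : ℝ) = a + j + n := by push_cast; ring
    rw [e1, e2]
    have hfac2 : ((Nat.factorial (n+j) : ℝ)) ≠ 0 := by
      exact_mod_cast (Nat.factorial_pos (n+j)).ne'
    have hG2 : Real.Gamma (a + j + n) ≠ 0 := by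
      have : (0:ℝ) < a + j + n := by
        have : (0:ℝ) ≤ j := Nat.cast_nonneg j
        have : (0:ℝ) ≤ n := Nat.cast_nonneg n
        positivity
      exact (Real.Gamma_pos_of_pos this).ne'
    field_simp
  refine ⟨?_, ?_, ?_⟩
  · -- integrability
    have hmaj : IntegrableOn (fun u : ℝ => (|z| ^ n * Real.exp |z|) * u ^ (a - 1))
        (Set.Ioo (0:ℝ) 1) := (int_rpow (a-1) (by linarith)).const_mul _
    refine Integrable.mono' hmaj ?_ ?_
    · have hc : Continuous (fun u : ℝ =>
          Real.exp (z*u) - ∑ k ∈ Finset.range n, (z*u)^k / (Nat.factorial k : ℝ)) := by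
        refine Continuous.sub (by fun_prop) ?_
        refine continuous_finset_sum _ fun k _ => by fun_prop
      exact ((meas_base (a - n - 1) (n-1)).mul hc.measurable).aestronglyMeasurable
    · filter_upwards [ae_restrict_mem measurableSet_Ioo] with u hu
      have hu0 : 0 < u := hu.1
      have h1u : (0:ℝ) ≤ 1 - u := by linarith [hu.2]
      rw [Real.norm_eq_abs, tail_eq n (z*u), abs_mul, abs_mul,
        abs_of_nonneg (Real.rpow_nonneg hu0.le _), abs_of_nonneg (pow_nonneg h1u _)]
      have hb1 : (1-u) ^ (n-1) ≤ 1 := pow_le_one₀ h1u (by linarith [hu.2])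
      have hb2 : |∑' j : ℕ, (z*u) ^ (n + j) / (Nat.factorial (n + j) : ℝ)|
          ≤ |z*u| ^ n * Real.exp |z*u| := tail_abs_bound n (z*u)
      have hzu : |z*u| = |z| * u := by rw [abs_mul, abs_of_nonneg hu0.le]
      have hzu1 : |z| * u ≤ |z| := by
        nlinarith [abs_nonneg z, hu.2]
      have hb3 : |z*u| ^ n * Real.exp |z*u| ≤ (|z| * u) ^ n * Real.exp |z| := by
        rw [hzu]
        exact mul_le_mul_of_nonneg_left (Real.exp_le_exp.2 hzu1) (by positivity)
      have hpow : u ^ (a - n - 1) * u ^ n = u ^ (a - 1) := by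
        rw [← Real.rpow_natCast u n, ← Real.rpow_add hu0]
        congr 1; ring
      have hr : (0:ℝ) ≤ u ^ (a - n - 1) := Real.rpow_nonneg hu0.le _
      calc u ^ (a - n - 1) * (1-u) ^ (n-1)
            * |∑' j : ℕ, (z*u) ^ (n + j) / (Nat.factorial (n + j) : ℝ)|
          ≤ u ^ (a - n - 1) * 1 * ((|z| * u) ^ n * Real.exp |z|) := by
            have habs : (0:ℝ) ≤ |∑' j : ℕ, (z*u) ^ (n + j) / (Nat.factorial (n + j) : ℝ)| :=
              abs_nonneg _
            have h4 : (1-u) ^ (n-1) * |∑' j : ℕ, (z*u) ^ (n + j) / (Nat.factorial (n + j) : ℝ)|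
                ≤ 1 * ((|z| * u) ^ n * Real.exp |z|) :=
              mul_le_mul hb1 (hb2.trans hb3) habs zero_le_one
            rw [mul_assoc, mul_assoc]
            exact mul_le_mul_of_nonneg_left h4 hr
        _ = |z| ^ n * Real.exp |z| * (u ^ (a - 1)) := by
            rw [← hpow, mul_pow]; ring
  · -- summability
    refine Summable.of_nonneg_of_le (fun j => abs_nonneg _) (fun j => ?_)
      ((hS.mul_left (1 / (Nat.factorial (n-1) : ℝ))))
    rw [hterm j, abs_mul, abs_of_nonneg (by positivity :
      (0:ℝ) ≤ 1 / (Nat.factorial (n-1) : ℝ))]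
    refine mul_le_mul_of_nonneg_left ?_ (by positivity)
    calc |∫ u in Set.Ioo (0:ℝ) 1, g j u| ≤ ∫ u in Set.Ioo (0:ℝ) 1, ‖g j u‖ := by
          simpa [Real.norm_eq_abs] using
            norm_integral_le_integral_norm (μ := volume.restrict (Set.Ioo (0:ℝ) 1)) (g j)
      _ ≤ |z| ^ (n + j) / (Nat.factorial (n + j) : ℝ) * B := hnorm_le j
  · -- the equality
    rw [setIntegral_congr_fun measurableSet_Ioo hpt, hswap, ← tsum_mul_left]
    exact tsum_congr fun j => (hterm j).symm

end NLT
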